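/- Let S be a left reversible semitopological semigroup acting jointly continuously on a nonempty compact subset Y of a Hausdorff topological space. Then F = ⋂_{s∈S} s.Y is nonempty and satisfies s.F = F for all s ∈ S. -/

import Mathlib

open scoped Topology

open Filter Set

/-- a left reversible semitopological semigroup acting jointly
continuously on a nonempty compact subset `Y` of a Hausdorff space with `s.Y ⊆ Y`
satisfies: `F = ⋂_{s} s.Y` is nonempty and `s.F = F` for all `s`. -/
theorem stmt8 {S T : Type*} [Semigroup S] [TopologicalSpace S] [T2Space S] [Nonempty S]
    [TopologicalSpace T] [T2Space T]
    (hlc : ∀ t : S, Continuous fun s : S => t * s)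
    (hrc : ∀ t : S, Continuous fun s : S => s * t)
    (hrev : ∀ a b : S,
      (closure {x : S | ∃ s : S, x = a * s} ∩ closure {x : S | ∃ s : S, x = b * s}).Nonempty)
    (Y : Set T) (hYc : IsCompact Y) (hYne : Y.Nonempty)
    (act : S → T → T)
    (hmaps : ∀ s : S, ∀ y ∈ Y, act s y ∈ Y)
    (haction : ∀ s t : S, ∀ y ∈ Y, act (s * t) y = act s (act t y))
    (hjc : ContinuousOn (fun p : S × T => act p.1 p.2) (Set.univ ×ˢ Y)) :
    (⋂ s : S, act s '' Y).Nonempty ∧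
    ∀ s : S, act s '' (⋂ u : S, act u '' Y) = ⋂ u : S, act u '' Y := by
  classical
  have cont_s : ∀ s : S, ContinuousOn (act s) Y := by
    intro s
    exact hjc.comp ((continuous_const.prodMk continuous_id).continuousOn)
      (fun y hy => ⟨trivial, hy⟩)
  have compact_im : ∀ s : S, IsCompact (act s '' Y) := fun s =>
    hYc.image_of_continuousOn (cont_s s)
  have closed_im : ∀ s : S, IsClosed (act s '' Y) := fun s => (compact_im s).isClosed
  have im_ne : ∀ s : S, (act s '' Y).Nonempty := fun s => hYne.image _
  have cont_y : ∀ y ∈ Y, Continuous fun w : S => act w y := by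
    intro y hy
    rw [← continuousOn_univ]
    exact hjc.comp ((continuous_id.prodMk continuous_const).continuousOn)
      (fun w _ => ⟨trivial, hy⟩)
  -- key lemma 1: if x ∈ closure (aS) then x.Y ⊆ a.Y
  have key1 : ∀ a x : S, x ∈ closure {z : S | ∃ s : S, z = a * s} →
      act x '' Y ⊆ act a '' Y := by
    intro a x hx
    rintro _ ⟨y, hy, rfl⟩
    have hsub : closure {z : S | ∃ s : S, z = a * s} ⊆ {w : S | act w y ∈ act a '' Y} := by
      apply closure_minimal
      · rintro _ ⟨s, rfl⟩
        show act (a * s) y ∈ act a '' Y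
        rw [haction a s y hy]
        exact ⟨act s y, hmaps s y hy, rfl⟩
      · exact (closed_im a).preimage (cont_y y hy)
    exact hsub hx
  -- key lemma 2: {w | q ∈ w.Y} is closed
  have closedA : ∀ q : T, IsClosed {w : S | q ∈ act w '' Y} := by
    intro q
    apply isClosed_of_closure_subset
    intro w hw
    have h1 : (𝓝[{w : S | q ∈ act w '' Y}] w).NeBot :=
      mem_closure_iff_nhdsWithin_neBot.1 hw
    obtain ⟨U, hU⟩ := Filter.exists_ultrafilter_le (𝓝[{w : S | q ∈ act w '' Y}] w)
    have hA : {w : S | q ∈ act w '' Y} ∈ U := hU self_mem_nhdsWithin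
    have hUw : (U : Filter S) ≤ 𝓝 w := hU.trans nhdsWithin_le_nhds
    set z : S → T := fun a => if h : ∃ p ∈ Y, act a p = q then h.choose else hYne.some with hz
    have hzp : ∀ a ∈ {w : S | q ∈ act w '' Y}, z a ∈ Y ∧ act a (z a) = q := by
      intro a ha
      obtain ⟨p, hp, hpq⟩ := ha
      have h : ∃ p ∈ Y, act a p = q := ⟨p, hp, hpq⟩
      simp only [hz, dif_pos h]
      exact ⟨h.choose_spec.1, h.choose_spec.2⟩
    have hYU : Y ∈ Ultrafilter.map z U := Ultrafilter.mem_map.2 <|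
      Filter.mem_of_superset hA (fun a ha => (hzp a ha).1)
    obtain ⟨p, hpY, hp⟩ := hYc.ultrafilter_le_nhds (Ultrafilter.map z U)
      (le_principal_iff.2 hYU)
    have htend : Tendsto (fun a : S => (a, z a)) U (𝓝[Set.univ ×ˢ Y] (w, p)) := by
      rw [nhdsWithin]
      refine tendsto_inf.2 ⟨?_, le_principal_iff.2 ?_⟩
      · exact Filter.Tendsto.prodMk_nhds hUw hp
      · exact Filter.mem_map.2 (Filter.mem_of_superset hA (fun a ha => ⟨trivial, (hzp a ha).1⟩))
    have hcw : ContinuousWithinAt (fun p : S × T => act p.1 p.2) (Set.univ ×ˢ Y) (w, p) :=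
      hjc (w, p) ⟨trivial, hpY⟩
    have htend2 : Tendsto (fun a : S => act a (z a)) U (𝓝 (act w p)) :=
      hcw.tendsto.comp htend
    have heq : (fun a : S => act a (z a)) =ᶠ[(U : Filter S)] fun _ => q :=
      Filter.eventuallyEq_of_mem hA (fun a ha => (hzp a ha).2)
    have htend3 : Tendsto (fun _ : S => q) U (𝓝 (act w p)) := htend2.congr' heq
    have hq : act w p = q := tendsto_nhds_unique htend3 tendsto_const_nhds
    exact ⟨p, hpY, hq⟩
  have dir : ∀ a b : S, ∃ c : S, act c '' Y ⊆ act a '' Y ∧ act c '' Y ⊆ act b '' Y := by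
    intro a b
    obtain ⟨x, hxa, hxb⟩ := hrev a b
    exact ⟨x, key1 a x hxa, key1 b x hxb⟩
  have hFne : (⋂ s : S, act s '' Y).Nonempty := by
    apply IsCompact.nonempty_iInter_of_directed_nonempty_isCompact_isClosed
      (fun s => act s '' Y) _ im_ne compact_im closed_im
    intro a b
    obtain ⟨c, h1, h2⟩ := dir a b
    exact ⟨c, h1, h2⟩
  have hard : ∀ s : S, (⋂ u : S, act u '' Y) ⊆ act s '' (⋂ u : S, act u '' Y) := by
    intro s y hy
    have hclosed2 : IsClosed {w : T | w ∈ Y ∧ act s w = y} := by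
      have he : {w : T | w ∈ Y ∧ act s w = y} = Y ∩ act s ⁻¹' {y} := by
        ext w; simp [Set.mem_inter_iff]
      rw [he]
      exact (cont_s s).preimage_isClosed_of_isClosed hYc.isClosed isClosed_singleton
    set C : S → Set T := fun t => act t '' Y ∩ {w : T | w ∈ Y ∧ act s w = y} with hC
    have hCne : ∀ t : S, (C t).Nonempty := by
      intro t
      have hyt : y ∈ act (s * t) '' Y := Set.mem_iInter.1 hy (s * t)
      obtain ⟨z, hz, hzy⟩ := hyt
      refine ⟨act t z, ⟨z, hz, rfl⟩, hmaps t z hz, ?_⟩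
      rw [← haction s t z hz]; exact hzy
    have hCcomp : ∀ t : S, IsCompact (C t) := fun t => (compact_im t).inter_right hclosed2
    have hCclosed : ∀ t : S, IsClosed (C t) := fun t => (closed_im t).inter hclosed2
    have hCdir : Directed (· ⊇ ·) C := by
      intro a b
      obtain ⟨c, h1, h2⟩ := dir a b
      exact ⟨c, Set.inter_subset_inter_left _ h1, Set.inter_subset_inter_left _ h2⟩
    obtain ⟨w, hw⟩ := IsCompact.nonempty_iInter_of_directed_nonempty_isCompact_isClosed
      C hCdir hCne hCcomp hCclosed
    have hw' : ∀ t : S, w ∈ C t := Set.mem_iInter.1 hw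
    refine ⟨w, Set.mem_iInter.2 (fun t => (hw' t).1), ?_⟩
    exact (hw' (Classical.arbitrary S)).2.2
  have inv : ∀ s : S, act s '' (⋂ u : S, act u '' Y) ⊆ ⋂ u : S, act u '' Y := by
    intro s
    rintro _ ⟨y, hy, rfl⟩
    rw [Set.mem_iInter]
    intro u
    obtain ⟨x, hxu, hxs⟩ := hrev u s
    apply key1 u x hxu
    have hsS : {z : S | ∃ t : S, z = s * t} ⊆ {w : S | act s y ∈ act w '' Y} := by
      rintro _ ⟨t, rfl⟩
      have hyt : y ∈ act t '' Y := Set.mem_iInter.1 hy t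
      obtain ⟨z, hz, rfl⟩ := hyt
      exact ⟨z, hz, haction s t z hz⟩
    exact closure_minimal hsS (closedA (act s y)) hxs
  exact ⟨hFne, fun s => subset_antisymm (inv s) (hard s)⟩
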